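/- The set S = {(x₁, x₂) ∈ ℝ² : x₁ ∈ ℕ, x₁ ≥ 1, x₁·x₂ ≥ 1} cannot be written as ⋃_{i=1}^k Sⁱ + intcone(r₁,…,r_t) for any finite collection of nonempty convex sets Sⁱ ⊆ ℝ² and integer vectors r₁,…,r_t ∈ ℤ², where intcone(r₁,…,r_t) = {Σ λᵢ rᵢ : λᵢ ∈ ℕ}. -/

import Mathlib

open Pointwise

theorem stmt7 :
    ¬ ∃ (k t : ℕ) (T : Fin k → Set (ℝ × ℝ)) (r : Fin t → ℤ × ℤ),
      (∀ i, (T i).Nonempty ∧ Convex ℝ (T i)) ∧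
      {x : ℝ × ℝ | (∃ m : ℕ, x.1 = (m : ℝ)) ∧ 1 ≤ x.1 ∧ 1 ≤ x.1 * x.2} =
        (⋃ i, T i) +
          {v : ℝ × ℝ | ∃ lam : Fin t → ℕ,
            v = ∑ j, (lam j : ℝ) • (((r j).1 : ℝ), ((r j).2 : ℝ))} := by
  rintro ⟨k, t, T, r, hT, hEq⟩
  set S : Set (ℝ × ℝ) :=
    {x : ℝ × ℝ | (∃ m : ℕ, x.1 = (m : ℝ)) ∧ 1 ≤ x.1 ∧ 1 ≤ x.1 * x.2} with hS
  set C : Set (ℝ × ℝ) :=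
    {v : ℝ × ℝ | ∃ lam : Fin t → ℕ,
      v = ∑ j, (lam j : ℝ) • (((r j).1 : ℝ), ((r j).2 : ℝ))} with hCdef
  have h0C : (0 : ℝ × ℝ) ∈ C := ⟨0, by simp⟩
  -- every element of C has integer second coordinate
  have hCint : ∀ c ∈ C, ∃ N : ℤ, c.2 = (N : ℝ) := by
    rintro c ⟨lam, rfl⟩
    refine ⟨∑ j, (lam j : ℤ) * (r j).2, ?_⟩
    rw [Prod.snd_sum]
    push_cast
    rfl
  -- the union is contained in S
  have hsub : (⋃ i, T i) ⊆ S := by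
    intro x hx
    rw [hEq]
    exact Set.mem_add.2 ⟨x, hx, 0, h0C, add_zero x⟩
  -- the minimal points are in S
  have hmem : ∀ n : ℕ, (((n : ℝ) + 1), 1 / ((n : ℝ) + 1)) ∈ S := by
    intro n
    have hpos : (0 : ℝ) < (n : ℝ) + 1 := by positivity
    refine ⟨⟨n + 1, by push_cast; ring⟩, by simp, ?_⟩
    simp only
    rw [mul_one_div_cancel (ne_of_gt hpos)]
  have key : ∀ n : ℕ, ∃ i : Fin k, ∃ x ∈ T i, ∃ c ∈ C,
      x + c = (((n : ℝ) + 1), 1 / ((n : ℝ) + 1)) := by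
    intro n
    have hp := hmem n
    rw [hEq] at hp
    obtain ⟨x, hx, c, hc, hxc⟩ := Set.mem_add.1 hp
    obtain ⟨i, hi⟩ := Set.mem_iUnion.1 hx
    exact ⟨i, x, hi, c, hc, hxc⟩
  choose f s hsT c hcC hsc using key
  -- pigeonhole
  obtain ⟨n, n', hnn', hf⟩ :=
    Fintype.exists_ne_map_eq_of_card_lt (fun n : Fin (k + 1) => f n.val) (by simp)
  set m : ℕ := n.val with hm
  set m' : ℕ := n'.val with hm'
  have hmm' : m ≠ m' := fun h => hnn' (Fin.val_injective h)
  have hfmm' : f m = f m' := hf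
  -- first coordinates agree by convexity
  have hconv := (hT (f m)).2
  have hsm : s m ∈ S := hsub (Set.mem_iUnion.2 ⟨f m, hsT m⟩)
  have hsm' : s m' ∈ S := hsub (Set.mem_iUnion.2 ⟨f m', hsT m'⟩)
  have hsm'T : s m' ∈ T (f m) := hfmm' ▸ hsT m'
  have hhalf : ∀ x y : ℝ × ℝ, x ∈ T (f m) → y ∈ T (f m) → ∀ a b : ℕ,
      x.1 = (a : ℝ) → y.1 = (b : ℝ) → a < b → False := by
    intro x y hx hy a b hxa hyb hab
    have hba : (0 : ℝ) < (b : ℝ) - (a : ℝ) := by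
      have : (a : ℝ) < (b : ℝ) := by exact_mod_cast hab
      linarith
    have hba1 : (1 : ℝ) ≤ (b : ℝ) - (a : ℝ) := by
      have : (a : ℝ) + 1 ≤ (b : ℝ) := by exact_mod_cast hab
      linarith
    set θ : ℝ := 1 / (2 * ((b : ℝ) - (a : ℝ))) with hθ
    have hθpos : 0 < θ := by positivity
    have hθle : θ ≤ 1 / 2 := by
      rw [hθ]
      rw [div_le_div_iff₀ (by linarith) (by norm_num)]
      linarith
    have hz : (1 - θ) • x + θ • y ∈ T (f m) :=
      hconv hx hy (by linarith) (le_of_lt hθpos) (by ring)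
    have hzS := hsub (Set.mem_iUnion.2 ⟨f m, hz⟩)
    obtain ⟨⟨N, hN⟩, -, -⟩ := hzS
    have hz1 : ((1 - θ) • x + θ • y).1 = (1 - θ) * x.1 + θ * y.1 := rfl
    have hθval : θ * ((b : ℝ) - (a : ℝ)) = 1 / 2 := by
      rw [hθ]; field_simp
    have hN' : (N : ℝ) = (a : ℝ) + 1 / 2 := by
      rw [hN] at *
      rw [hz1, hxa, hyb] at hN
      nlinarith [hN, hθval]
    have h2 : ((2 * N : ℕ) : ℝ) = ((2 * a + 1 : ℕ) : ℝ) := by push_cast; linarith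
    have : 2 * N = 2 * a + 1 := by exact_mod_cast h2
    omega
  obtain ⟨a, ha⟩ := hsm.1
  obtain ⟨a', ha'⟩ := hsm'.1
  have haa' : (s m).1 = (s m').1 := by
    rcases lt_trichotomy a a' with h | h | h
    · exact absurd (hhalf _ _ (hsT m) hsm'T a a' ha ha' h) not_false
    · rw [ha, ha', h]
    · exact absurd (hhalf _ _ hsm'T (hsT m) a' a ha' ha h) not_false
  -- integer second coordinates of the cone elements
  obtain ⟨N, hN⟩ := hCint _ (hcC m)
  obtain ⟨N', hN'⟩ := hCint _ (hcC m')
  -- cross memberships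
  have cross : ∀ p q : ℕ, f p = f q →
      (s p).1 = (s q).1 → 1 / ((p : ℝ) + 1) - (c p).2 + (c q).2 ≥ 1 / ((q : ℝ) + 1) := by
    intro p q hpq h1
    have hx : s p + c q ∈ S := by
      rw [hEq]
      exact Set.mem_add.2 ⟨s p, Set.mem_iUnion.2 ⟨f p, hsT p⟩, c q, hcC q, rfl⟩
    have hq1 : (s q).1 + (c q).1 = (q : ℝ) + 1 := congrArg Prod.fst (hsc q)
    have hq2 : (s q).2 + (c q).2 = 1 / ((q : ℝ) + 1) := congrArg Prod.snd (hsc q)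
    have hp2 : (s p).2 + (c p).2 = 1 / ((p : ℝ) + 1) := congrArg Prod.snd (hsc p)
    have hx1 : (s p + c q).1 = (q : ℝ) + 1 := by
      show (s p).1 + (c q).1 = (q : ℝ) + 1
      rw [h1]; exact hq1
    have hqpos : (0 : ℝ) < (q : ℝ) + 1 := by positivity
    have hx2 : 1 ≤ (s p + c q).1 * (s p + c q).2 := hx.2.2
    rw [hx1] at hx2
    have hx2' : (s p + c q).2 ≥ 1 / ((q : ℝ) + 1) := by
      rw [ge_iff_le, div_le_iff₀ hqpos]; linarith [hx2]
    have : (s p + c q).2 = (s p).2 + (c q).2 := rfl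
    rw [this] at hx2'
    linarith
  have h1 := cross m m' hfmm' haa'
  have h2 := cross m' m hfmm'.symm haa'.symm
  rw [hN, hN'] at h1 h2
  have hmpos : (0 : ℝ) < (m : ℝ) + 1 := by positivity
  have hm'pos : (0 : ℝ) < (m' : ℝ) + 1 := by positivity
  have hone : 1 / ((m : ℝ) + 1) ≤ 1 := by
    rw [div_le_one hmpos]; linarith [Nat.cast_nonneg (α := ℝ) m]
  have hone' : 1 / ((m' : ℝ) + 1) ≤ 1 := by
    rw [div_le_one hm'pos]; linarith [Nat.cast_nonneg (α := ℝ) m']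
  have hopos : 0 < 1 / ((m : ℝ) + 1) := by positivity
  have hopos' : 0 < 1 / ((m' : ℝ) + 1) := by positivity
  have hd1 : ((N' - N : ℤ) : ℝ) < 1 := by push_cast; linarith
  have hd2 : (-1 : ℝ) < ((N' - N : ℤ) : ℝ) := by push_cast; linarith
  have hNN : N' - N = 0 := by
    have l1 : N' - N < 1 := by exact_mod_cast hd1
    have l2 : -1 < N' - N := by exact_mod_cast hd2
    omega
  have hz : ((N' - N : ℤ) : ℝ) = 0 := by rw [hNN]; norm_num
  push_cast at hz
  have heq2 : 1 / ((m : ℝ) + 1) = 1 / ((m' : ℝ) + 1) := by linarith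
  field_simp at heq2
  exact hmm' (by exact_mod_cast (by linarith [heq2] : (m : ℝ) = m'))
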